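/- Theorem 1 (linearization at full cooperation). The SR-EGN vector field F is differentiable at the all-ones profile 𝟙, its Fréchet derivative at 𝟙 is the diagonal linear map whose v-th diagonal entry is λ_v = −σ_C·(k v − β v), and if β v > k v for every player v then λ_v < 0 for every v (so the full-cooperation state is linearly asymptotically stable). -/

import Mathlib

/-- Theorem 1 (linearization at full cooperation). The SR-EGN vector field `F` is
differentiable at the all-ones profile, its Fréchet derivative there is the diagonal
linear map with `v`-th diagonal entry `λ_v = -σC * (k v - β v)`, and if `β v > k v`
for every player `v`, then `λ_v < 0` for every `v`. -/
theorem srEgn_linearization_allC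
    (N : ℕ) (hN : 1 ≤ N)
    (A : Fin N → Fin N → ℝ)
    (hA01 : ∀ v w, A v w = 0 ∨ A v w = 1)
    (hAdiag : ∀ v, A v v = 0)
    (σC σD : ℝ) (hσC : σC < 0) (hσD : 0 < σD)
    (β : Fin N → ℝ)
    (k : Fin N → ℝ) (hk : ∀ v, k v = ∑ w, A v w)
    (G : Fin N → (Fin N → ℝ) → ℝ)
    (hG : ∀ v x, G v x = ∑ w, A v w * ((σC + σD) * x w - σD))
    (f : ℝ → ℝ) (hf : ∀ y, f y = (σC + σD) * y - σD)
    (F : (Fin N → ℝ) → (Fin N → ℝ))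
    (hF : ∀ x v, F x v = x v * (1 - x v) * (G v x - β v * f (x v))) :
    HasFDerivAt F
      (ContinuousLinearMap.pi (fun v =>
        (-σC * (k v - β v)) • (ContinuousLinearMap.proj v : (Fin N → ℝ) →L[ℝ] ℝ)))
      (fun _ => 1)
    ∧ ((∀ v, β v > k v) → ∀ v, -σC * (k v - β v) < 0) := by
  constructor
  · rw [hasFDerivAt_pi']
    intro v
    have hcomp : (ContinuousLinearMap.proj v).comp
        (ContinuousLinearMap.pi (fun v =>
          (-σC * (k v - β v)) • (ContinuousLinearMap.proj v : (Fin N → ℝ) →L[ℝ] ℝ)))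
        = (-σC * (k v - β v)) • (ContinuousLinearMap.proj v : (Fin N → ℝ) →L[ℝ] ℝ) := by
      ext u
      simp
    rw [hcomp]
    -- component function
    have hFv : (fun x => F x v)
        = fun x : Fin N → ℝ => (x v * (1 - x v))
            * ((∑ w, A v w * ((σC + σD) * x w - σD)) - β v * ((σC + σD) * x v - σD)) := by
      funext x; rw [hF, hG, hf]
    rw [hFv]
    set one : Fin N → ℝ := fun _ => 1 with hone
    have hp : ∀ w, HasFDerivAt (fun x : Fin N → ℝ => x w)
        (ContinuousLinearMap.proj w : (Fin N → ℝ) →L[ℝ] ℝ) one := fun w => (ContinuousLinearMap.proj w : (Fin N → ℝ) →L[ℝ] ℝ).hasFDerivAt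
    have hg := HasFDerivAt.mul (𝕜 := ℝ) (𝔸' := ℝ) (hp v) ((hp v).const_sub (1:ℝ))
    have hGv : HasFDerivAt (fun x : Fin N → ℝ => ∑ w, A v w * ((σC + σD) * x w - σD))
        (∑ w, (A v w * (σC + σD)) • (ContinuousLinearMap.proj w : (Fin N → ℝ) →L[ℝ] ℝ)) one := by
      apply HasFDerivAt.fun_sum
      intro w _
      have := (((hp w).const_mul (σC + σD)).sub_const σD).const_mul (A v w)
      rw [smul_smul] at this; exact this
    have hfv : HasFDerivAt (fun x : Fin N → ℝ => β v * ((σC + σD) * x v - σD))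
        ((β v * (σC + σD)) • (ContinuousLinearMap.proj v : (Fin N → ℝ) →L[ℝ] ℝ)) one := by
      have := (((hp v).const_mul (σC + σD)).sub_const σD).const_mul (β v)
      rw [smul_smul] at this; exact this
    have hh := hGv.sub hfv
    have hmain := hg.mul hh
    convert hmain using 1
    · rfl
    · rfl
    ext u
    simp only [ContinuousLinearMap.add_apply, ContinuousLinearMap.smul_apply,
      ContinuousLinearMap.sub_apply, ContinuousLinearMap.coe_sum', Finset.sum_apply,
      ContinuousLinearMap.proj_apply, ContinuousLinearMap.zero_apply, ContinuousLinearMap.neg_apply, hone, Pi.mul_apply, Pi.sub_apply]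
    have h1 : (∑ w, A v w * ((σC + σD) * 1 - σD)) - β v * ((σC + σD) * 1 - σD)
        = σC * (k v - β v) := by
      rw [hk]
      rw [← Finset.sum_mul]
      ring
    simp only [smul_eq_mul]
    rw [h1]  -- maybe shapes differ; adjust
    ring
  · intro hβ v
    have := hβ v
    nlinarith
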